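/- For the Type B connection on ℝ⁺ × ℝ with Christoffel symbols Γ_{ij}^k = (x¹)^{-1} C_{ij}^k for real constants C_{ij}^k = C_{ji}^k, the Ricci tensor ρ (defined by ρ_{jk} = ∂_i Γ_{jk}^i − ∂_j Γ_{ik}^i + Γ_{ip}^i Γ_{jk}^p − Γ_{jp}^i Γ_{ik}^p, summing over i,p) is symmetric if and only if C₂₂² = −C₁₂¹. -/
import Mathlib


open Real

/-- Partial derivative ∂_i on ℝ². -/
noncomputable def pd (i : Fin 2) (f : ℝ × ℝ → ℝ) : ℝ × ℝ → ℝ :=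
  fun p => if i = 0 then deriv (fun t => f (t, p.2)) p.1
           else deriv (fun t => f (p.1, t)) p.2

/-- Affine Hessian H(f)_{ij} = ∂_i∂_j f − Σ_k Γ_{ij}^k ∂_k f. -/
noncomputable def Hess (Γ : Fin 2 → Fin 2 → Fin 2 → (ℝ × ℝ → ℝ))
    (f : ℝ × ℝ → ℝ) (i j : Fin 2) : ℝ × ℝ → ℝ :=
  fun p => pd i (pd j f) p - ∑ k, Γ i j k p * pd k f p

/-- Ricci tensor ρ_{jk} = ∂_i Γ_{jk}^i − ∂_j Γ_{ik}^i + Γ_{il}^i Γ_{jk}^l − Γ_{jl}^i Γ_{ik}^l. -/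
noncomputable def Ric (Γ : Fin 2 → Fin 2 → Fin 2 → (ℝ × ℝ → ℝ)) (j k : Fin 2) :
    ℝ × ℝ → ℝ :=
  fun p => (∑ i, pd i (Γ j k i) p) - (∑ i, pd j (Γ i k i) p)
    + (∑ i, ∑ l, Γ i l i p * Γ j k l p) - (∑ i, ∑ l, Γ j l i p * Γ i k l p)

/-- Symmetrized Ricci tensor. -/
noncomputable def RicS (Γ : Fin 2 → Fin 2 → Fin 2 → (ℝ × ℝ → ℝ)) (i j : Fin 2) :
    ℝ × ℝ → ℝ :=
  fun p => (Ric Γ i j p + Ric Γ j i p) / 2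

/-- Covariant derivative of the Ricci tensor: (∇ρ)(i,j;k). -/
noncomputable def nabRic (Γ : Fin 2 → Fin 2 → Fin 2 → (ℝ × ℝ → ℝ)) (i j k : Fin 2) :
    ℝ × ℝ → ℝ :=
  fun p => pd k (Ric Γ i j) p - ∑ l, Γ k i l p * Ric Γ l j p
    - ∑ l, Γ k j l p * Ric Γ i l p

/-- Type B Christoffel symbols Γ_{ij}^k = C_{ij}^k / x¹. -/
noncomputable def ΓB (C : Fin 2 → Fin 2 → Fin 2 → ℝ) :
    Fin 2 → Fin 2 → Fin 2 → (ℝ × ℝ → ℝ) :=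
  fun i j k p => C i j k / p.1


lemma pd0_ΓB (C : Fin 2 → Fin 2 → Fin 2 → ℝ) (i j k : Fin 2) (p : ℝ × ℝ)
    (hp : p.1 ≠ 0) : pd 0 (ΓB C i j k) p = -(C i j k) / p.1 ^ 2 := by
  have h : HasDerivAt (fun t : ℝ => C i j k / t) (-(C i j k) / p.1 ^ 2) p.1 := by
    simpa [div_eq_mul_inv, neg_div, mul_comm, mul_neg] using
      (hasDerivAt_inv hp).const_mul (C i j k)
  simp only [pd, if_pos rfl, ΓB]
  exact h.deriv

lemma pd1_ΓB (C : Fin 2 → Fin 2 → Fin 2 → ℝ) (i j k : Fin 2) (p : ℝ × ℝ) :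
    pd 1 (ΓB C i j k) p = 0 := by
  simp [pd, ΓB]

/-- For a Type B connection, the Ricci tensor is symmetric iff C₂₂² = −C₁₂¹. -/
theorem typeB_ricci_symmetric_iff
    (C : Fin 2 → Fin 2 → Fin 2 → ℝ)
    (hsym : ∀ i j k, C i j k = C j i k) :
    (∀ j k : Fin 2, ∀ p : ℝ × ℝ, 0 < p.1 →
        Ric (ΓB C) j k p = Ric (ΓB C) k j p)
      ↔ C 1 1 1 = - C 0 1 0 := by
  have h10 : ∀ k, C 1 0 k = C 0 1 k := fun k => hsym 1 0 k
  constructor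
  · intro h
    have h01 := h 0 1 (1, 0) (by norm_num)
    have hp : ((1:ℝ), (0:ℝ)).1 ≠ 0 := one_ne_zero
    simp only [Ric, Fin.sum_univ_two, pd0_ΓB C _ _ _ _ hp, pd1_ΓB, ΓB] at h01
    norm_num at h01
    rw [h10 0, h10 1] at h01
    nlinarith [h01]
  · intro hC j k p hp0
    have hp : p.1 ≠ 0 := ne_of_gt hp0
    fin_cases j <;> fin_cases k
    · rfl
    · simp only [Fin.mk_zero, Fin.mk_one, Ric, Fin.sum_univ_two,
        pd0_ΓB C _ _ _ _ hp, pd1_ΓB, ΓB, h10, hC]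
      field_simp
      ring
    · simp only [Fin.mk_zero, Fin.mk_one, Ric, Fin.sum_univ_two,
        pd0_ΓB C _ _ _ _ hp, pd1_ΓB, ΓB, h10, hC]
      field_simp
      ring
    · rfl
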